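/- Let S be a sequence of m(r-1) points in ℝ^{m-1} obtained by repeating each of m affinely independent points e_1, …, e_m exactly (r-1) times. Then for every partition of S into r pairwise disjoint subsequences S_1, …, S_r, the intersection ⋂_{i=1}^r aff(S_i) is empty. -/

import Mathlib

/-- Tightness for affine hulls: repeating each of `m` affinely independent points of
`ℝ^{m-1}` exactly `r - 1` times yields a sequence of `m (r-1)` points such that every
partition into `r` disjoint subsequences has empty intersection of affine hulls. -/
theorem affine_tverberg_tight (m r : ℕ) (hr : 1 ≤ r) (hm : 1 ≤ m)
    (e : Fin m → (Fin (m - 1) → ℝ)) (he : AffineIndependent ℝ e)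
    (S : Fin m × Fin (r - 1) → (Fin (m - 1) → ℝ)) (hSe : ∀ p, S p = e p.1) :
    ∀ J : Fin r → Finset (Fin m × Fin (r - 1)),
      (∀ i j, i ≠ j → Disjoint (J i) (J j)) →
      (∀ p : Fin m × Fin (r - 1), ∃ k, p ∈ J k) →
      (⋂ k : Fin r,
        (affineSpan ℝ (S '' (J k : Set (Fin m × Fin (r - 1)))) :
          Set (Fin (m - 1) → ℝ))) = ∅ := by
  classical
  intro J hdisj hcover
  rw [Set.eq_empty_iff_forall_notMem]
  intro x hx
  simp only [Set.mem_iInter] at hx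
  -- Step 1: for each j, some part contains no copy of e_j.
  have hstep1 : ∀ j : Fin m, ∃ k : Fin r, ∀ t, (j, t) ∉ J k := by
    intro j
    choose g hg using fun t => hcover (j, t)
    have hns : ¬ Function.Surjective g := by
      intro hs
      have := Fintype.card_le_of_surjective g hs
      simp only [Fintype.card_fin] at this
      omega
    rw [Function.Surjective] at hns
    push_neg at hns
    obtain ⟨k, hk⟩ := hns
    refine ⟨k, fun t ht => ?_⟩
    exact Finset.disjoint_left.mp (hdisj (g t) k (hk t)) (hg t) ht
  choose f hf using hstep1
  -- Step 2: x lies in the affine span of each "face".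
  have hsub : ∀ j : Fin m, x ∈ affineSpan ℝ (e '' {i | i ≠ j}) := by
    intro j
    refine affineSpan_mono ℝ ?_ (hx (f j))
    rintro y ⟨p, hp, rfl⟩
    obtain ⟨a, b⟩ := p
    refine ⟨a, ?_, (hSe (a, b)).symm⟩
    intro h
    subst h
    exact hf a b hp
  -- Step 3: x can be written as an affine combination avoiding j, for each j.
  have hcomb : ∀ j : Fin m, ∃ (s : Finset (Fin m)) (w : Fin m → ℝ),
      j ∉ s ∧ (∑ i ∈ s, w i) = 1 ∧ x = s.affineCombination ℝ e w := by
    intro j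
    have h := hsub j
    rw [Set.image_eq_range] at h
    obtain ⟨s, w, hw, hxw⟩ := eq_affineCombination_of_mem_affineSpan h
    refine ⟨s.map (Function.Embedding.subtype _),
      fun i => if h : i ≠ j then w ⟨i, h⟩ else 0, ?_, ?_, ?_⟩
    · simp
    · rw [Finset.sum_map]
      rw [← hw]
      apply Finset.sum_congr rfl
      intro i _
      simp only [Function.Embedding.coe_subtype]
      exact dif_pos (show (↑i : Fin m) ≠ j from i.2)
    · rw [Finset.affineCombination_map, hxw]
      refine (Finset.affineCombination_congr s ?_ (fun i _ => rfl)).symm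
      intro i _
      simp only [Function.comp, Function.Embedding.coe_subtype]
      exact dif_pos (show (↑i : Fin m) ≠ j from i.2)
  choose s w hjs hsum hxc using hcomb
  -- Step 4: uniqueness of barycentric coordinates forces all weights to vanish.
  set j0 : Fin m := ⟨0, hm⟩
  have hzero : ∀ j : Fin m, Set.indicator (↑(s j0)) (w j0) j = 0 := by
    intro j
    have hind := he.indicator_eq_of_affineCombination_eq (s j0) (s j) (w j0) (w j)
      (hsum j0) (hsum j) ((hxc j0).symm.trans (hxc j))
    have := congrFun hind j
    rw [this, Set.indicator_of_notMem (by exact_mod_cast hjs j)]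
  have : (∑ i ∈ s j0, w j0 i) = 0 := by
    refine Finset.sum_eq_zero fun i hi => ?_
    have := hzero i
    rwa [Set.indicator_of_mem (by exact_mod_cast hi)] at this
  rw [hsum j0] at this
  norm_num at this
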